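/- If z(θ) = x(θ) + i y(θ) denotes the curve e^{θS}·z₀ in the upper half-plane, then x and y satisfy the ODE system dx/dθ = 1 + x² − y² and dy/dθ = 2xy. -/

import Mathlib

open Complex Real

/-- The Möbius action of the rotation e^{θS} = [[cos θ, sin θ],[−sin θ, cos θ]]. -/
noncomputable def rotAct (θ : ℝ) (z : ℂ) : ℂ :=
  ((Real.cos θ : ℂ) * z + (Real.sin θ : ℂ)) / (-(Real.sin θ : ℂ) * z + (Real.cos θ : ℂ))

/-- writing z(θ) = e^{θS}·z₀ = x(θ) + i y(θ), one has
dx/dθ = 1 + x² − y² and dy/dθ = 2xy. -/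
theorem rot_orbit_ode (z₀ : ℂ) (hz₀ : 0 < z₀.im)
    (x y : ℝ → ℝ) (hx : ∀ θ, x θ = (rotAct θ z₀).re) (hy : ∀ θ, y θ = (rotAct θ z₀).im) :
    ∀ θ : ℝ, HasDerivAt x (1 + x θ ^ 2 - y θ ^ 2) θ ∧ HasDerivAt y (2 * x θ * y θ) θ := by
  intro θ
  set f : ℝ → ℂ := fun θ => rotAct θ z₀ with hf
  have hden : ∀ t : ℝ, (-(Real.sin t : ℂ) * z₀ + (Real.cos t : ℂ)) ≠ 0 := by
    intro t h
    have him := congrArg Complex.im h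
    simp [Complex.add_im, Complex.mul_im, -Complex.ofReal_sin, -Complex.ofReal_cos] at him
    rcases him with h1 | h1
    · have hre := congrArg Complex.re h
      simp [Complex.add_re, Complex.mul_re, h1, -Complex.ofReal_sin, -Complex.ofReal_cos] at hre
      have := Real.sin_sq_add_cos_sq t
      rw [h1, hre] at this; norm_num at this
    · linarith
  have hN : HasDerivAt (fun t : ℝ => (Real.cos t : ℂ) * z₀ + (Real.sin t : ℂ))
      (-(Real.sin θ : ℂ) * z₀ + (Real.cos θ : ℂ)) θ := by
    have h1 : HasDerivAt (fun t : ℝ => (Real.cos t : ℂ)) (-(Real.sin θ : ℂ)) θ := by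
      simpa using ((Real.hasDerivAt_cos θ).ofReal_comp)
    have h2 : HasDerivAt (fun t : ℝ => (Real.sin t : ℂ)) ((Real.cos θ : ℂ)) θ := by
      simpa using ((Real.hasDerivAt_sin θ).ofReal_comp)
    exact (h1.mul_const z₀).add h2
  have hD : HasDerivAt (fun t : ℝ => -(Real.sin t : ℂ) * z₀ + (Real.cos t : ℂ))
      (-((Real.cos θ : ℂ) * z₀ + (Real.sin θ : ℂ))) θ := by
    have h1 : HasDerivAt (fun t : ℝ => -(Real.sin t : ℂ)) (-(Real.cos θ : ℂ)) θ := by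
      exact ((Real.hasDerivAt_sin θ).ofReal_comp).neg
    have h2 : HasDerivAt (fun t : ℝ => (Real.cos t : ℂ)) (-(Real.sin θ : ℂ)) θ := by
      simpa using ((Real.hasDerivAt_cos θ).ofReal_comp)
    have := (h1.mul_const z₀).add h2
    refine this.congr_deriv ?_; ring
  have hD0 := hden θ
  have hfd : HasDerivAt f (1 + f θ ^ 2) θ := by
    have := hN.div hD hD0
    refine this.congr_deriv (Eq.symm ?_)
    rw [hf]
    simp only [rotAct]
    rw [div_pow,
      show (1:ℂ) = (-(Real.sin θ : ℂ) * z₀ + (Real.cos θ : ℂ))^2 / (-(Real.sin θ : ℂ) * z₀ + (Real.cos θ : ℂ))^2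
        from (div_self (pow_ne_zero 2 hD0)).symm,
      ← add_div]
    congr 1
    ring
  have hre : HasDerivAt x (1 + x θ ^ 2 - y θ ^ 2) θ := by
    have h := (Complex.reCLM.hasFDerivAt.comp_hasDerivAt θ hfd)
    have hx' : x = fun t => (f t).re := funext hx
    rw [hx']
    refine h.congr_deriv (Eq.symm ?_)
    simp [hx θ, hy θ, pow_two, Complex.add_re, Complex.mul_re]
    ring
  have him : HasDerivAt y (2 * x θ * y θ) θ := by
    have h := (Complex.imCLM.hasFDerivAt.comp_hasDerivAt θ hfd)
    have hy' : y = fun t => (f t).im := funext hy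
    rw [hy']
    refine h.congr_deriv (Eq.symm ?_)
    simp [hx θ, hy θ, pow_two, Complex.add_im, Complex.mul_im]
    ring
  exact ⟨hre, him⟩
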